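/- Let n ≥ r ≥ 2, 0 < η ≤ (r+1)^{-1}, C > 0, 1 < p ≤ ∞ with conjugate exponent q. Let H be an η-nonatomic hypergraph system, e an edge with |e| = r, and f ≥ 0 integrable and measurable with respect to coordinates in e. If (∫_A f dμ)^q ≤ C^q(μ(A)+(r+3)η) holds for every A ∈ S_{∂e}, then f is (K,η,p)-regular with K = C(r+4)^{1/q} η^{−1/p} (interpreting η^{−1/p} = 1 when p = ∞); in particular, if p = ∞ then f is (C(r+4), η, ∞)-regular. -/

import Mathlib

open MeasureTheory ENNReal

/-- `A ⊆ ∏ i, X i` depends only on the coordinates in `e`. -/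
def DependsOnCoords {n : ℕ} {X : Fin n → Type*} (e : Finset (Fin n)) (A : Set (∀ i, X i)) : Prop :=
  ∀ x y : ∀ i, X i, (∀ i ∈ e, x i = y i) → (x ∈ A ↔ y ∈ A)

/-- A function on `∏ i, X i` depending only on the coordinates in `e`. -/
def DependsOnF {n : ℕ} {X : Fin n → Type*} (e : Finset (Fin n)) (f : (∀ i, X i) → ℝ) : Prop :=
  ∀ x y : ∀ i, X i, (∀ i ∈ e, x i = y i) → f x = f y

/-- `A` belongs to `B_e`: it is measurable and depends only on the coordinates in `e`. -/
def CubeSet {n : ℕ} {X : Fin n → Type*} [∀ i, MeasurableSpace (X i)]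
    (e : Finset (Fin n)) (A : Set (∀ i, X i)) : Prop :=
  MeasurableSet A ∧ DependsOnCoords e A

/-- The boundary `∂e` of `e`: subsets of `e` of size `|e| - 1`. -/
def bdry {n : ℕ} (e : Finset (Fin n)) : Finset (Finset (Fin n)) :=
  e.powerset.filter (fun e' => e'.card + 1 = e.card)

/-- `A ∈ S_{∂e}`: `A` is an intersection `⋂_{e' ∈ ∂e} A_{e'}` with `A_{e'} ∈ B_{e'}`. -/
def SPartial {n : ℕ} {X : Fin n → Type*} [∀ i, MeasurableSpace (X i)]
    (e : Finset (Fin n)) (A : Set (∀ i, X i)) : Prop :=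
  ∃ F : Finset (Fin n) → Set (∀ i, X i),
    (∀ e' ∈ bdry e, CubeSet e' (F e')) ∧ A = ⋂ e' ∈ bdry e, F e'

/-- Every atom of `ν` has measure at most `η`. -/
def AtomsLE {Y : Type*} [MeasurableSpace Y] (ν : Measure Y) (η : ℝ) : Prop :=
  ∀ A : Set Y, MeasurableSet A → 0 < ν A →
    (∀ B : Set Y, B ⊆ A → MeasurableSet B → ν B = 0 ∨ ν B = ν A) →
    (ν A).toReal ≤ η

/-- The conditional expectation of `f` with respect to the σ-algebra generated by the
finite partition `P` (explicit formula: average of `f` on each cell). -/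
noncomputable def partCE {Y : Type*} [MeasurableSpace Y] (ν : Measure Y)
    (P : Finset (Set Y)) (f : Y → ℝ) : Y → ℝ :=
  fun x => ∑ s ∈ P, Set.indicator s (fun _ => (∫ y in s, f y ∂ν) / (ν s).toReal) x

/-- `f` is `(C, η, p)`-regular: for every partition `P ⊆ S_{∂e}` of the whole space with
all cells of measure at least `η`, `‖E(f | σ(P))‖_{L_p} ≤ C`. -/
def LpRegular {n : ℕ} {X : Fin n → Type*} [∀ i, MeasurableSpace (X i)]
    (μ : Measure (∀ i, X i)) (e : Finset (Fin n)) (C η : ℝ) (p : ℝ≥0∞)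
    (f : (∀ i, X i) → ℝ) : Prop :=
  ∀ P : Finset (Set (∀ i, X i)), (∀ s ∈ P, SPartial e s) →
    (P : Set (Set (∀ i, X i))).PairwiseDisjoint id →
    ⋃₀ (P : Set (Set (∀ i, X i))) = Set.univ →
    (∀ s ∈ P, η ≤ (μ s).toReal) →
    eLpNorm (partCE μ P f) p μ ≤ ENNReal.ofReal C


/-- **Proposition 4.1(b).** If `(∫_A f dμ)^q ≤ C^q (μ(A) + (r+3)η)` for every
`A ∈ S_{∂e}`, then `f` is `(K, η, p)`-regular with `K = C (r+4)^{1/q} η^{-1/p}`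
(with `η^{-1/p} = 1` when `p = ∞`); in particular if `p = ∞` then `f` is
`(C(r+4), η, ∞)`-regular. -/
theorem stmt6 {n r : ℕ} (hnr : r ≤ n) (hr : 2 ≤ r)
    {X : Fin n → Type*} [∀ i, MeasurableSpace (X i)]
    (μ : ∀ i, Measure (X i)) [∀ i, IsProbabilityMeasure (μ i)]
    (η : ℝ) (hη0 : 0 < η) (hη1 : η ≤ 1 / (r + 1))
    (C : ℝ) (hC : 0 < C) (p : ℝ≥0∞) (hp : 1 < p)
    (q : ℝ) (hq : 1 ≤ q) (hpq : 1 / p + 1 / ENNReal.ofReal q = 1)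
    (hnonatomic : ∀ i, AtomsLE (μ i) η)
    (𝓗 : Finset (Finset (Fin n))) (e : Finset (Fin n)) (he : e ∈ 𝓗) (hecard : e.card = r)
    (f : (∀ i, X i) → ℝ) (hf0 : 0 ≤ f) (hfmeas : Measurable f) (hfdep : DependsOnF e f)
    (hfint : Integrable f (Measure.pi μ))
    (hHolder : ∀ A : Set (∀ i, X i), SPartial e A →
      (∫ x in A, f x ∂(Measure.pi μ)) ^ q
        ≤ C ^ q * (((Measure.pi μ) A).toReal + (r + 3) * η)) :
    LpRegular (Measure.pi μ) e (C * ((r : ℝ) + 4) ^ (1 / q) * η ^ (-(1 / p.toReal))) η p f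
      ∧ (p = ∞ → LpRegular (Measure.pi μ) e (C * ((r : ℝ) + 4)) η ∞ f) := by
  have hq0 : (0:ℝ) < q := lt_of_lt_of_le one_pos hq
  have hp0 : p ≠ 0 := (lt_trans zero_lt_one hp).ne'
  -- conjugate exponent identity in the reals
  have hexp : p.toReal⁻¹ + q⁻¹ = 1 := by
    have h1 : (1/p : ℝ≥0∞) ≠ ⊤ := by
      simp only [one_div, ne_eq, ENNReal.inv_eq_top]
      exact hp0
    have h2 : (1 / ENNReal.ofReal q : ℝ≥0∞) ≠ ⊤ := by
      simp only [one_div, ne_eq, ENNReal.inv_eq_top, ENNReal.ofReal_eq_zero, not_le]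
      exact hq0
    have := congrArg ENNReal.toReal hpq
    rwa [ENNReal.toReal_add h1 h2, one_div, one_div, ENNReal.toReal_inv,
      ENNReal.toReal_inv, ENNReal.toReal_ofReal hq0.le, ENNReal.toReal_one] at this
  have hqinv : 1 / q ≤ 1 := by rw [div_le_one hq0]; exact hq
  have heq : -(1 / p.toReal) = 1 / q - 1 := by
    rw [one_div, one_div]; linarith
  -- the main regularity claim, with the generic constant
  have hmain : LpRegular (Measure.pi μ) e
      (C * ((r : ℝ) + 4) ^ (1 / q) * η ^ (-(1 / p.toReal))) η p f := by
    intro P hPS hPd hPu hPη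
    set K : ℝ := C * ((r : ℝ) + 4) ^ (1 / q) * η ^ (-(1 / p.toReal)) with hK
    -- bound on each cell average
    have hcell : ∀ s ∈ P,
        (∫ y in s, f y ∂(Measure.pi μ)) / ((Measure.pi μ) s).toReal ≤ K := by
      intro s hs
      set m : ℝ := ((Measure.pi μ) s).toReal with hm
      have hmη : η ≤ m := hPη s hs
      have hm0 : 0 < m := lt_of_lt_of_le hη0 hmη
      set a : ℝ := ∫ y in s, f y ∂(Measure.pi μ) with ha
      have ha0 : 0 ≤ a := integral_nonneg hf0
      have hH : a ^ q ≤ C ^ q * (m + ((r:ℝ) + 3) * η) := hHolder s (hPS s hs)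
      have hH2 : a ^ q ≤ C ^ q * (((r:ℝ) + 4) * m) := by
        refine hH.trans (mul_le_mul_of_nonneg_left ?_ (by positivity))
        have hr3 : (0:ℝ) ≤ (r:ℝ) + 3 := by positivity
        nlinarith
      have haK : a ≤ C * ((r : ℝ) + 4) ^ (1 / q) * m ^ (1 / q) := by
        have h1 : (a ^ q) ^ (1/q) = a := by
          rw [← Real.rpow_mul ha0, mul_one_div_cancel hq0.ne', Real.rpow_one]
        calc a = (a ^ q) ^ (1/q) := h1.symm
          _ ≤ (C ^ q * (((r:ℝ) + 4) * m)) ^ (1/q) :=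
              Real.rpow_le_rpow (Real.rpow_nonneg ha0 q) hH2 (by positivity)
          _ = C * ((r : ℝ) + 4) ^ (1 / q) * m ^ (1 / q) := by
              rw [Real.mul_rpow (by positivity) (by positivity),
                Real.mul_rpow (by positivity) hm0.le,
                ← Real.rpow_mul hC.le, mul_one_div_cancel hq0.ne', Real.rpow_one,
                mul_assoc]
      have hmdiv : m ^ (1/q) / m = m ^ (1/q - 1) := by
        rw [Real.rpow_sub hm0, Real.rpow_one]
      have hηm : m ^ (1/q - 1) ≤ η ^ (1/q - 1) :=
        Real.rpow_le_rpow_of_nonpos hη0 hmη (by linarith)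
      calc a / m ≤ (C * ((r:ℝ) + 4) ^ (1/q) * m ^ (1/q)) / m := by gcongr
        _ = C * ((r:ℝ) + 4) ^ (1/q) * (m ^ (1/q) / m) := by ring
        _ = C * ((r:ℝ) + 4) ^ (1/q) * m ^ (1/q - 1) := by rw [hmdiv]
        _ ≤ C * ((r:ℝ) + 4) ^ (1/q) * η ^ (1/q - 1) :=
            mul_le_mul_of_nonneg_left hηm (by positivity)
        _ = K := by rw [hK, heq]
    -- pointwise bound
    have hbound : ∀ x, ‖partCE (Measure.pi μ) P f x‖ ≤ K := by
      intro x
      have hx : x ∈ ⋃₀ (P : Set (Set (∀ i, X i))) := by rw [hPu]; trivial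
      obtain ⟨s₀, hs₀, hxs₀⟩ := hx
      have hs₀P : s₀ ∈ P := hs₀
      have hval : partCE (Measure.pi μ) P f x
          = (∫ y in s₀, f y ∂(Measure.pi μ)) / ((Measure.pi μ) s₀).toReal := by
        unfold partCE
        refine (Finset.sum_eq_single_of_mem s₀ hs₀P ?_).trans ?_
        · intro s hsP hne
          exact Set.indicator_of_notMem
            (fun hxs => Set.disjoint_left.mp (hPd hsP hs₀ hne) hxs hxs₀) _
        · exact Set.indicator_of_mem hxs₀ _
      rw [hval, Real.norm_of_nonneg (div_nonneg (integral_nonneg hf0) ENNReal.toReal_nonneg)]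
      exact hcell s₀ hs₀P
    calc eLpNorm (partCE (Measure.pi μ) P f) p (Measure.pi μ)
        ≤ (Measure.pi μ) Set.univ ^ p.toReal⁻¹ * ENNReal.ofReal K :=
          eLpNorm_le_of_ae_bound (ae_of_all _ hbound)
      _ = ENNReal.ofReal K := by simp
  refine ⟨hmain, ?_⟩
  intro hpinf
  have hq1 : q = 1 := by
    rw [hpinf] at hexp
    simp only [ENNReal.toReal_top, _root_.inv_zero, zero_add] at hexp
    exact inv_eq_one.mp hexp
  have hconst : C * ((r : ℝ) + 4) ^ (1 / q) * η ^ (-(1 / p.toReal)) = C * ((r : ℝ) + 4) := by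
    rw [hq1, hpinf]
    simp [Real.rpow_one]
  rw [← hconst, ← hpinf]
  exact hmain
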